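/- Let H be a real Hilbert space, D a dictionary in H, and f ∈ A_1(D). Suppose (f_m)_{m≥0} is a sequence generated by the Rescaled Pure Greedy Algorithm RPGA(D) for f: f_0 = 0, and for each m ≥ 1, if f_{m−1} = f then f_m := f; otherwise there is φ_m ∈ D with |⟨f − f_{m−1}, φ_m⟩| = sup_{φ∈D} |⟨f − f_{m−1}, φ⟩|, and with λ_m := ⟨f − f_{m−1}, φ_m⟩, ĥ_m := f_{m−1} + λ_m φ_m, and s_m := ⟨f, ĥ_m⟩ / ‖ĥ_m‖², one sets f_m := s_m ĥ_m. Then for every m ≥ 1, ‖f − f_m‖ ≤ |f|_{A_1(D)} · m^{−1/2}. -/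

import Mathlib

open scoped BigOperators RealInnerProductSpace

/-- A dictionary in a normed space: a set of norm-one elements with dense linear span. -/
def IsDictionary (H : Type*) [NormedAddCommGroup H] [NormedSpace ℝ H] (D : Set H) : Prop :=
  (∀ φ ∈ D, ‖φ‖ = 1) ∧ Dense (Submodule.span ℝ D : Set H)

/-- Finite linear combinations of dictionary elements with coefficients of total
absolute sum at most `M`. -/
def A1Pre (H : Type*) [NormedAddCommGroup H] [NormedSpace ℝ H] (D : Set H) (M : ℝ) : Set H :=
  {g | ∃ (n : ℕ) (c : Fin n → ℝ) (φ : Fin n → H),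
    (∀ i, φ i ∈ D) ∧ (∑ i, |c i|) ≤ M ∧ g = ∑ i, c i • φ i}

/-- The class `A₁(D, M)`: the closure of `A1Pre`. -/
def A1 (H : Type*) [NormedAddCommGroup H] [NormedSpace ℝ H] (D : Set H) (M : ℝ) : Set H :=
  closure (A1Pre H D M)

/-- The class `A₁(D)`: the union of the classes `A₁(D, M)` over all `M > 0`. -/
def A1Class (H : Type*) [NormedAddCommGroup H] [NormedSpace ℝ H] (D : Set H) : Set H :=
  ⋃ M ∈ Set.Ioi (0 : ℝ), A1 H D M

/-- The "semi-norm" `|f|_{A₁(D)} = inf {M : f ∈ A₁(D, M)}`. -/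
noncomputable def A1Norm (H : Type*) [NormedAddCommGroup H] [NormedSpace ℝ H]
    (D : Set H) (f : H) : ℝ :=
  sInf {M : ℝ | 0 < M ∧ f ∈ A1 H D M}

section Aux

variable {H : Type*} [NormedAddCommGroup H] [InnerProductSpace ℝ H]

lemma rpga_proj_sq_le (f h : H) :
    ‖f - (⟪f, h⟫ / ‖h‖ ^ 2) • h‖ ^ 2 ≤ ‖f - h‖ ^ 2 := by
  rcases eq_or_ne h 0 with rfl | hh
  · simp
  · have hhp : (0:ℝ) < ‖h‖ := norm_pos_iff.2 hh
    have hh2 : (0:ℝ) < ‖h‖ ^ 2 := by positivity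
    rw [@norm_sub_sq_real, @norm_sub_sq_real, real_inner_smul_right, norm_smul,
      Real.norm_eq_abs, mul_pow, sq_abs]
    have key : ‖f‖ ^ 2 - 2 * ⟪f, h⟫ + ‖h‖ ^ 2 -
        (‖f‖ ^ 2 - 2 * (⟪f, h⟫ / ‖h‖ ^ 2 * ⟪f, h⟫) + (⟪f, h⟫ / ‖h‖ ^ 2) ^ 2 * ‖h‖ ^ 2)
        = (⟪f, h⟫ - ‖h‖ ^ 2) ^ 2 / ‖h‖ ^ 2 := by
      field_simp; ring
    linarith [div_nonneg (sq_nonneg (⟪f, h⟫ - ‖h‖ ^ 2)) hh2.le, key]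

lemma rpga_proj_orth (f h : H) :
    ⟪f - (⟪f, h⟫ / ‖h‖ ^ 2) • h, h⟫ = 0 := by
  rcases eq_or_ne h 0 with rfl | hh
  · simp
  · have hhp : (0:ℝ) < ‖h‖ := norm_pos_iff.2 hh
    have hh2 : (‖h‖:ℝ) ^ 2 ≠ 0 := by positivity
    rw [inner_sub_left, real_inner_smul_left, real_inner_self_eq_norm_sq]
    field_simp
    ring

lemma rpga_A1_inner_le {D : Set H} {M : ℝ} {f : H} (hf : f ∈ A1 H D M)
    (r : H) (lam : ℝ) (hlam : 0 ≤ lam) (hb : ∀ ψ ∈ D, |⟪r, ψ⟫| ≤ lam) :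
    ⟪r, f⟫ ≤ M * lam := by
  have hC : IsClosed {g : H | ⟪r, g⟫ ≤ M * lam} :=
    isClosed_le (continuous_const.inner continuous_id) continuous_const
  have hsub : A1Pre H D M ⊆ {g : H | ⟪r, g⟫ ≤ M * lam} := by
    rintro g ⟨n, c, φ, hφ, hc, rfl⟩
    simp only [Set.mem_setOf_eq, inner_sum, real_inner_smul_right]
    calc ∑ i, c i * ⟪r, φ i⟫ ≤ ∑ i, |c i| * lam := by
          refine Finset.sum_le_sum fun i _ => ?_
          calc c i * ⟪r, φ i⟫ ≤ |c i * ⟪r, φ i⟫| := le_abs_self _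
            _ = |c i| * |⟪r, φ i⟫| := abs_mul _ _
            _ ≤ |c i| * lam := mul_le_mul_of_nonneg_left (hb _ (hφ i)) (abs_nonneg _)
      _ = (∑ i, |c i|) * lam := (Finset.sum_mul _ _ _).symm
      _ ≤ M * lam := mul_le_mul_of_nonneg_right hc hlam
  exact closure_minimal hsub hC hf

lemma rpga_A1_norm_le {D : Set H} {M : ℝ} {f : H} (hf : f ∈ A1 H D M)
    (hD1 : ∀ φ ∈ D, ‖φ‖ = 1) : ‖f‖ ≤ M := by
  have hC : IsClosed {g : H | ‖g‖ ≤ M} := isClosed_le continuous_norm continuous_const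
  have hsub : A1Pre H D M ⊆ {g : H | ‖g‖ ≤ M} := by
    rintro g ⟨n, c, φ, hφ, hc, rfl⟩
    calc ‖∑ i, c i • φ i‖ ≤ ∑ i, ‖c i • φ i‖ := norm_sum_le _ _
      _ = ∑ i, |c i| := by
          refine Finset.sum_congr rfl fun i _ => ?_
          rw [norm_smul, Real.norm_eq_abs, hD1 _ (hφ i), mul_one]
      _ ≤ M := hc
  exact closure_minimal hsub hC hf

lemma rpga_rec_numeric {M x : ℝ} {n : ℕ} (hM : 0 < M) (hn : 1 ≤ n) (hx0 : 0 ≤ x)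
    (hx : x ≤ M ^ 2 / n) : x - (x / M) ^ 2 ≤ M ^ 2 / (n + 1) := by
  have hN : (1:ℝ) ≤ n := by exact_mod_cast hn
  have hN0 : (0:ℝ) < n := by linarith
  have hM2 : (0:ℝ) < M ^ 2 := by positivity
  have hxn : (n:ℝ) * x ≤ M ^ 2 := by
    rw [le_div_iff₀ hN0] at hx; linarith [hx]
  have hxM : x ≤ M ^ 2 := by nlinarith
  have hL : x - (x / M) ^ 2 = (x * M ^ 2 - x ^ 2) / M ^ 2 := by field_simp
  rw [hL, div_le_div_iff₀ hM2 (by linarith : (0:ℝ) < (n:ℝ) + 1)]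
  nlinarith [mul_nonneg (sub_nonneg.2 hxn) (sub_nonneg.2 hxM), sq_nonneg x]

end Aux

/-- Convergence rate of the Rescaled Pure Greedy Algorithm RPGA(D) in a Hilbert space:
if `f ∈ A₁(D)`, then the output `(f_m)` satisfies
`‖f − f_m‖ ≤ |f|_{A₁(D)} · m^{−1/2}` for all `m ≥ 1`. -/
theorem rpga_hilbert_rate {H : Type*} [NormedAddCommGroup H] [InnerProductSpace ℝ H]
    [CompleteSpace H]
    (D : Set H) (hD : IsDictionary H D) (f : H) (hf : f ∈ A1Class H D)
    (fseq : ℕ → H) (h0 : fseq 0 = 0)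
    (hstep : ∀ m : ℕ,
      (fseq m = f → fseq (m + 1) = f) ∧
      (fseq m ≠ f → ∃ φ ∈ D,
        |⟪f - fseq m, φ⟫| = sSup {x : ℝ | ∃ ψ ∈ D, x = |⟪f - fseq m, ψ⟫|} ∧
        fseq (m + 1) =
          (⟪f, fseq m + ⟪f - fseq m, φ⟫ • φ⟫ / ‖fseq m + ⟪f - fseq m, φ⟫ • φ‖ ^ 2) •
            (fseq m + ⟪f - fseq m, φ⟫ • φ))) :
    ∀ m : ℕ, 1 ≤ m → ‖f - fseq m‖ ≤ A1Norm H D f * (m : ℝ) ^ (-(1 : ℝ) / 2) := by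
  -- orthogonality of the residual to the current approximation
  have orth : ∀ m, ⟪f - fseq m, fseq m⟫ = 0 := by
    intro m
    induction m with
    | zero => simp [h0]
    | succ n _ =>
      by_cases h : fseq n = f
      · have := (hstep n).1 h
        simp [this]
      · obtain ⟨φ, hφD, hsup, hrec⟩ := (hstep n).2 h
        rw [hrec, real_inner_smul_right]
        rw [rpga_proj_orth f (fseq n + ⟪f - fseq n, φ⟫ • φ)]
        ring
  -- one-step decrease of the squared residual, for any admissible M
  have key : ∀ M : ℝ, 0 < M → f ∈ A1 H D M →
      ∀ m : ℕ, 1 ≤ m → ‖f - fseq m‖ ^ 2 ≤ M ^ 2 / m := by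
    intro M hM hfM
    have astep : ∀ m, ‖f - fseq (m + 1)‖ ^ 2 ≤
        ‖f - fseq m‖ ^ 2 - (‖f - fseq m‖ ^ 2 / M) ^ 2 := by
      intro m
      by_cases h : fseq m = f
      · have h1 := (hstep m).1 h
        rw [h1, h, sub_self]
        simp
      · obtain ⟨φ, hφD, hsup, hrec⟩ := (hstep m).2 h
        set r := f - fseq m with hr
        set lam := ⟪r, φ⟫ with hlam
        set g_h := fseq m + lam • φ with hg_h
        have h1 : ‖f - fseq (m + 1)‖ ^ 2 ≤ ‖f - g_h‖ ^ 2 := by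
          rw [hrec]; exact rpga_proj_sq_le f g_h
        have hfh : f - g_h = r - lam • φ := by
          rw [hg_h, hr]; abel
        have h2 : ‖f - g_h‖ ^ 2 = ‖r‖ ^ 2 - lam ^ 2 := by
          rw [hfh, @norm_sub_sq_real, real_inner_smul_right, norm_smul,
            Real.norm_eq_abs, mul_pow, sq_abs, hD.1 φ hφD, ← hlam]
          ring
        -- sup bound
        have hbdd : BddAbove {x : ℝ | ∃ ψ ∈ D, x = |⟪r, ψ⟫|} := by
          refine ⟨‖r‖, ?_⟩
          rintro x ⟨ψ, hψ, rfl⟩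
          calc |⟪r, ψ⟫| ≤ ‖r‖ * ‖ψ‖ := abs_real_inner_le_norm _ _
            _ = ‖r‖ := by rw [hD.1 ψ hψ, mul_one]
        have hsupb : ∀ ψ ∈ D, |⟪r, ψ⟫| ≤ |lam| := by
          intro ψ hψ
          rw [hsup]
          exact le_csSup hbdd ⟨ψ, hψ, rfl⟩
        have hdual : ⟪r, f⟫ ≤ M * |lam| :=
          rpga_A1_inner_le hfM r |lam| (abs_nonneg _) hsupb
        have hrf : ⟪r, f⟫ = ‖r‖ ^ 2 := by
          have : f = r + fseq m := by rw [hr]; abel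
          have horth := orth m
          rw [← hr] at horth
          rw [this, inner_add_right, real_inner_self_eq_norm_sq, horth]
          ring
        have h3 : ‖r‖ ^ 2 / M ≤ |lam| := by
          rw [div_le_iff₀ hM]
          rw [hrf] at hdual
          linarith [hdual]
        have h4 : (‖r‖ ^ 2 / M) ^ 2 ≤ lam ^ 2 := by
          rw [← sq_abs lam]
          exact pow_le_pow_left₀ (by positivity) h3 2
        calc ‖f - fseq (m + 1)‖ ^ 2 ≤ ‖r‖ ^ 2 - lam ^ 2 := h1.trans_eq h2
          _ ≤ ‖r‖ ^ 2 - (‖r‖ ^ 2 / M) ^ 2 := by linarith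
    have a0 : ‖f - fseq 0‖ ^ 2 ≤ M ^ 2 := by
      rw [h0, sub_zero]
      exact pow_le_pow_left₀ (norm_nonneg f) (rpga_A1_norm_le hfM hD.1) 2
    intro m hm
    induction m with
    | zero => omega
    | succ n ih =>
      rcases Nat.eq_zero_or_pos n with rfl | hn
      · have := astep 0
        have hsq : (0:ℝ) ≤ (‖f - fseq 0‖ ^ 2 / M) ^ 2 := sq_nonneg _
        push_cast
        norm_num
        linarith
      · have ihn := ih hn
        have := astep n
        have hrec := rpga_rec_numeric (x := ‖f - fseq n‖ ^ 2) hM hn (sq_nonneg _) ihn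
        push_cast at hrec ⊢
        linarith
  -- conclude
  intro m hm
  have hm0 : (0:ℝ) < m := by exact_mod_cast hm
  set t : ℝ := (m : ℝ) ^ (-(1 : ℝ) / 2) with ht
  have htpos : 0 < t := Real.rpow_pos_of_pos hm0 _
  have ht2 : t ^ 2 = 1 / m := by
    rw [ht, ← Real.rpow_natCast ((m:ℝ) ^ (-(1:ℝ)/2)) 2, ← Real.rpow_mul hm0.le]
    norm_num
    exact Real.rpow_neg_one _
  obtain ⟨M₀, hM₀, hfM₀⟩ : ∃ M, 0 < M ∧ f ∈ A1 H D M := by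
    simp only [A1Class, Set.mem_iUnion, Set.mem_Ioi, exists_prop] at hf
    exact hf
  have hne : {M : ℝ | 0 < M ∧ f ∈ A1 H D M}.Nonempty := ⟨M₀, hM₀, hfM₀⟩
  have hlb : ∀ M ∈ {M : ℝ | 0 < M ∧ f ∈ A1 H D M}, ‖f - fseq m‖ * t⁻¹ ≤ M := by
    rintro M ⟨hM, hfM⟩
    have hsq := key M hM hfM m hm
    have hMt : ‖f - fseq m‖ ≤ M * t := by
      have h1 : (M * t) ^ 2 = M ^ 2 / m := by
        rw [mul_pow, ht2]; ring
      have h2 : ‖f - fseq m‖ ^ 2 ≤ (M * t) ^ 2 := by rw [h1]; exact hsq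
      have hMt0 : 0 ≤ M * t := by positivity
      nlinarith [norm_nonneg (f - fseq m)]
    rw [← div_eq_mul_inv, div_le_iff₀ htpos]
    exact hMt
  have hInf : ‖f - fseq m‖ * t⁻¹ ≤ A1Norm H D f := le_csInf hne hlb
  calc ‖f - fseq m‖ = (‖f - fseq m‖ * t⁻¹) * t := by
        field_simp
    _ ≤ A1Norm H D f * t := mul_le_mul_of_nonneg_right hInf htpos.le
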